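/- Let g : ℝⁿ → ℝ be convex and twice continuously differentiable, and let φ : ℝⁿ → ℝ ∪ {+∞} be proper, lower semicontinuous and convex. Suppose the set X := argmin(g + φ) is nonempty. Then ∇g(x) = ∇g(y) for all x, y ∈ X; moreover, letting v = ∇g(x₀) for some x₀ ∈ X, one has X = {x ∈ ℝⁿ : ∇g(x) = v and −v ∈ ∂φ(x)}, where ∂φ(x) = {ξ ∈ ℝⁿ : φ(y) ≥ φ(x) + ⟨ξ, y − x⟩ for all y ∈ ℝⁿ} is the convex subdifferential of φ at x. -/

import Mathlib

open scoped BigOperators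
open Filter Set

lemma tendsto_slope_inner {E : Type*} [NormedAddCommGroup E] [InnerProductSpace ℝ E]
    [CompleteSpace E] (g : E → ℝ) (x d : E) (hd : DifferentiableAt ℝ g x) :
    Tendsto (fun t : ℝ => (g (x + t • d) - g x) / t) (nhdsWithin 0 (Set.Ioi 0))
      (nhds (inner ℝ (gradient g x) d : ℝ)) := by
  have hf : HasFDerivAt g ((InnerProductSpace.toDual ℝ E) (gradient g x)) x :=
    hasGradientAt_iff_hasFDerivAt.mp hd.hasGradientAt
  have hf' : HasFDerivAt g ((InnerProductSpace.toDual ℝ E) (gradient g x)) (x + (0:ℝ) • d) := by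
    simpa using hf
  have hc : HasDerivAt (fun t : ℝ => x + t • d) d 0 := by
    simpa using ((hasDerivAt_id (0:ℝ)).smul_const d).const_add x
  have hcomp : HasDerivAt (fun t : ℝ => g (x + t • d)) (inner ℝ (gradient g x) d : ℝ) 0 := by
    simpa [Function.comp_def] using hf'.comp_hasDerivAt (x := (0:ℝ)) hc
  have h3 : Tendsto (slope (fun t : ℝ => g (x + t • d)) 0) (nhdsWithin 0 (Ioi 0))
      (nhds (inner ℝ (gradient g x) d : ℝ)) :=
    (hasDerivAt_iff_tendsto_slope.mp hcomp).mono_left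
      (nhdsWithin_mono _ (by intro t ht; exact ne_of_gt ht))
  refine h3.congr (fun t => ?_)
  simp [slope_def_field, div_eq_inv_mul]

lemma comb_eq {E : Type*} [NormedAddCommGroup E] [Module ℝ E] (x y : E) (t : ℝ) :
    t • y + (1 - t) • x = x + t • (y - x) := by
  rw [smul_sub, sub_smul, one_smul]; abel

lemma grad_ineq {E : Type*} [NormedAddCommGroup E] [InnerProductSpace ℝ E]
    [CompleteSpace E] (g : E → ℝ) (hgconv : ConvexOn ℝ Set.univ g) (x : E)
    (hd : DifferentiableAt ℝ g x) (y : E) :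
    g x + (inner ℝ (gradient g x) (y - x) : ℝ) ≤ g y := by
  have hb : ∀ᶠ t in nhdsWithin (0:ℝ) (Set.Ioi 0),
      (g (x + t • (y - x)) - g x) / t ≤ g y - g x := by
    filter_upwards [Ioc_mem_nhdsGT_of_mem (by norm_num : (0:ℝ) ∈ Set.Ico 0 1)] with t ht
    have hc := hgconv.2 (Set.mem_univ y) (Set.mem_univ x) ht.1.le
      (by linarith [ht.2] : (0:ℝ) ≤ 1 - t) (by ring)
    rw [comb_eq] at hc
    simp only [smul_eq_mul] at hc
    rw [div_le_iff₀ ht.1]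
    nlinarith
  have := le_of_tendsto (tendsto_slope_inner g x (y - x) hd) hb
  linarith

lemma subgrad_eq_grad {E : Type*} [NormedAddCommGroup E] [InnerProductSpace ℝ E]
    [CompleteSpace E] (g : E → ℝ) (x : E) (hd : DifferentiableAt ℝ g x) (v : E)
    (h : ∀ z, g x + (inner ℝ v (z - x) : ℝ) ≤ g z) : gradient g x = v := by
  have key : ∀ d : E, (inner ℝ v d : ℝ) ≤ inner ℝ (gradient g x) d := by
    intro d
    refine ge_of_tendsto (tendsto_slope_inner g x d hd) ?_
    filter_upwards [self_mem_nhdsWithin] with t ht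
    have h2 := h (x + t • d)
    have h3 : (inner ℝ v (x + t • d - x) : ℝ) = t * inner ℝ v d := by
      rw [add_sub_cancel_left, inner_smul_right]
    rw [h3] at h2
    rw [le_div_iff₀ (mem_Ioi.mp ht)]
    linarith
  refine ext_inner_right ℝ (fun d => le_antisymm ?_ (key d))
  have := key (-d)
  simp only [inner_neg_right] at this
  linarith

/-- The convex subdifferential of an extended-real-valued function `φ` at `x`:
`∂φ(x) = {ξ : φ(y) ≥ φ(x) + ⟨ξ, y − x⟩ for all y}`. -/
def ESubdiff {n : ℕ} (φ : EuclideanSpace ℝ (Fin n) → EReal)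
    (x : EuclideanSpace ℝ (Fin n)) : Set (EuclideanSpace ℝ (Fin n)) :=
  {ξ | ∀ y, φ x + (((inner ℝ ξ (y - x) : ℝ)) : EReal) ≤ φ y}

/-- Let `g` be convex and `C²`, `φ` proper lsc convex with values in
`ℝ ∪ {+∞}`, and `X = argmin (g + φ)` nonempty. Then `∇g` is constant on `X`, and for
`x₀ ∈ X` with `v = ∇g(x₀)`, `X = {x : ∇g(x) = v and −v ∈ ∂φ(x)}`. -/
theorem stmt8 (n : ℕ) (hn : 0 < n)
    (g : EuclideanSpace ℝ (Fin n) → ℝ) (hgC : ContDiff ℝ 2 g)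
    (hgconv : ConvexOn ℝ Set.univ g)
    (φ : EuclideanSpace ℝ (Fin n) → EReal)
    (hproper : (∀ x, φ x ≠ ⊥) ∧ (∃ x, φ x ≠ ⊤))
    (hlsc : LowerSemicontinuous φ)
    (hφconv : ∀ x y : EuclideanSpace ℝ (Fin n), ∀ t : ℝ, 0 ≤ t → t ≤ 1 →
      φ (t • x + (1 - t) • y) ≤ ((t : ℝ) : EReal) * φ x + (((1 - t : ℝ)) : EReal) * φ y)
    (X : Set (EuclideanSpace ℝ (Fin n)))
    (hX : X = {x | ∀ y, (g x : EReal) + φ x ≤ (g y : EReal) + φ y})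
    (hne : X.Nonempty) :
    (∀ x ∈ X, ∀ y ∈ X, gradient g x = gradient g y) ∧
    (∀ x₀ ∈ X,
      X = {x | gradient g x = gradient g x₀ ∧ -(gradient g x₀) ∈ ESubdiff φ x}) := by
  have hdiff : ∀ x, DifferentiableAt ℝ g x :=
    fun x => (hgC.differentiable (by norm_num)).differentiableAt
  -- φ is finite on X
  have hfin : ∀ x ∈ X, ∃ r : ℝ, φ x = (r : EReal) := by
    intro x hx
    obtain ⟨y₀, hy₀⟩ := hproper.2
    rw [hX] at hx
    have h1 := hx y₀
    have htop : φ x ≠ ⊤ := by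
      intro h
      rw [h] at h1
      have hlt : (g y₀ : EReal) + φ y₀ < ⊤ :=
        EReal.add_lt_top (by simp) (lt_top_iff_ne_top.mpr hy₀).ne
      have : (g x : EReal) + ⊤ = ⊤ := by
        simp
      rw [this, top_le_iff] at h1
      exact absurd h1 hlt.ne
    exact ⟨(φ x).toReal, (EReal.coe_toReal htop (hproper.1 x)).symm⟩
  -- key subdifferential inclusion
  have hsub : ∀ x ∈ X, -(gradient g x) ∈ ESubdiff φ x := by
    intro x hx
    obtain ⟨r, hr⟩ := hfin x hx
    intro y
    by_cases hy : φ y = ⊤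
    · rw [hy]; exact le_top
    obtain ⟨s, hs⟩ : ∃ s : ℝ, φ y = (s : EReal) :=
      ⟨(φ y).toReal, (EReal.coe_toReal hy (hproper.1 y)).symm⟩
    rw [hr, hs, ← EReal.coe_add, EReal.coe_le_coe_iff]
    have key : r - s ≤ (inner ℝ (gradient g x) (y - x) : ℝ) := by
      refine ge_of_tendsto (tendsto_slope_inner g x (y - x) (hdiff x)) ?_
      filter_upwards [Ioc_mem_nhdsGT_of_mem (by norm_num : (0:ℝ) ∈ Set.Ico 0 1)] with t ht
      rw [hX] at hx
      have hz := hx (x + t • (y - x))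
      have hφz := hφconv y x t ht.1.le ht.2
      rw [comb_eq, hr, hs] at hφz
      rw [hr] at hz
      have hcomb : (g x : EReal) + (r : EReal) ≤
          (g (x + t • (y - x)) : EReal) + ((t * s + (1 - t) * r : ℝ) : EReal) := by
        refine le_trans hz (add_le_add_right ?_ _)
        refine le_trans hφz ?_
        rw [← EReal.coe_mul, ← EReal.coe_mul, ← EReal.coe_add]
      rw [← EReal.coe_add, ← EReal.coe_add, EReal.coe_le_coe_iff] at hcomb
      rw [le_div_iff₀ ht.1]
      nlinarith
    rw [inner_neg_left]
    linarith
  have hgradconst : ∀ x ∈ X, ∀ y ∈ X, gradient g x = gradient g y := by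
    intro x hx y hy
    obtain ⟨r, hr⟩ := hfin x hx
    obtain ⟨s, hs⟩ := hfin y hy
    have e1 : g x + r = g y + s := by
      have h1 := hx; rw [hX] at h1
      have h2 := hy; rw [hX] at h2
      have h3 := h1 y; have h4 := h2 x
      rw [hr, hs, ← EReal.coe_add, ← EReal.coe_add, EReal.coe_le_coe_iff] at h3 h4
      linarith
    have hsd := hsub x hx y
    rw [hr, hs, inner_neg_left, ← EReal.coe_add, EReal.coe_le_coe_iff] at hsd
    have hgi := grad_ineq g hgconv x (hdiff x) y
    have heq : g y = g x + (inner ℝ (gradient g x) (y - x) : ℝ) := by linarith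
    have hsg : ∀ z, g y + (inner ℝ (gradient g x) (z - y) : ℝ) ≤ g z := by
      intro z
      have h5 := grad_ineq g hgconv x (hdiff x) z
      have h6 : (inner ℝ (gradient g x) (z - x) : ℝ) =
          inner ℝ (gradient g x) (z - y) + inner ℝ (gradient g x) (y - x) := by
        rw [← inner_add_right]
        congr 1
        abel
      rw [h6] at h5
      linarith
    exact ((subgrad_eq_grad g y (hdiff y) _ hsg)).symm
  refine ⟨hgradconst, ?_⟩
  intro x₀ hx₀
  ext x
  constructor
  · intro hx
    refine ⟨hgradconst x hx x₀ hx₀, ?_⟩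
    rw [← hgradconst x hx x₀ hx₀]
    exact hsub x hx
  · rintro ⟨hgr, hsd⟩
    rw [hX]
    intro y
    have hxtop : φ x ≠ ⊤ := by
      intro h
      obtain ⟨y₀, hy₀⟩ := hproper.2
      have := hsd y₀
      rw [h] at this
      simp only [EReal.top_add_coe, top_le_iff] at this
      exact hy₀ this
    obtain ⟨r, hr⟩ : ∃ r : ℝ, φ x = (r : EReal) :=
      ⟨(φ x).toReal, (EReal.coe_toReal hxtop (hproper.1 x)).symm⟩
    by_cases hy : φ y = ⊤
    · rw [hy]; simp
    obtain ⟨s, hs⟩ : ∃ s : ℝ, φ y = (s : EReal) :=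
      ⟨(φ y).toReal, (EReal.coe_toReal hy (hproper.1 y)).symm⟩
    have h1 := hsd y
    rw [hr, hs, inner_neg_left, ← hgr, ← EReal.coe_add, EReal.coe_le_coe_iff] at h1
    have h2 := grad_ineq g hgconv x (hdiff x) y
    rw [hr, hs, ← EReal.coe_add, ← EReal.coe_add, EReal.coe_le_coe_iff]
    linarith
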